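/- For α ≥ -1/2 and n ∈ ℕ, the one-dimensional generalized Hermite function h_n^α is an eigenfunction of the Dunkl harmonic oscillator L_α = -((T^α)²) + x²: namely L_α h_n^α = (2n + 2α + 2) h_n^α. -/

import Mathlib

noncomputable def laguerre (α : ℝ) (n : ℕ) (x : ℝ) : ℝ :=
  ∑ k ∈ Finset.range (n + 1),
    (-1 : ℝ) ^ k * (Real.Gamma (n + α + 1) / ((Nat.factorial (n - k)) * Real.Gamma (α + k + 1)))
      * x ^ k / (Nat.factorial k)

noncomputable def hfun (α : ℝ) (n : ℕ) (x : ℝ) : ℝ :=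
  if n % 2 = 0 then
    (-1 : ℝ) ^ (n / 2) * Real.sqrt (Nat.factorial (n / 2) / Real.Gamma (n / 2 + α + 1)) *
      Real.exp (-x ^ 2 / 2) * laguerre α (n / 2) (x ^ 2)
  else
    (-1 : ℝ) ^ (n / 2) * Real.sqrt (Nat.factorial (n / 2) / Real.Gamma (n / 2 + α + 2)) *
      Real.exp (-x ^ 2 / 2) * x * laguerre (α + 1) (n / 2) (x ^ 2)

/-- The one-dimensional Dunkl operator of parameter α + 1/2. -/
noncomputable def dunklT (α : ℝ) (f : ℝ → ℝ) (x : ℝ) : ℝ :=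
  deriv f x + (α + 1/2) * (f x - f (-x)) / x

noncomputable def lagD (α : ℝ) (n : ℕ) (x : ℝ) : ℝ :=
  ∑ k ∈ Finset.range (n + 1),
    (-1 : ℝ) ^ k * (Real.Gamma (n + α + 1) / ((Nat.factorial (n - k)) * Real.Gamma (α + k + 1)))
      * ((k : ℝ) * x ^ (k - 1)) / (Nat.factorial k)

noncomputable def lagDD (α : ℝ) (n : ℕ) (x : ℝ) : ℝ :=
  ∑ k ∈ Finset.range (n + 1),
    (-1 : ℝ) ^ k * (Real.Gamma (n + α + 1) / ((Nat.factorial (n - k)) * Real.Gamma (α + k + 1)))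
      * ((k : ℝ) * (((k - 1 : ℕ) : ℝ) * x ^ (k - 1 - 1))) / (Nat.factorial k)

lemma hasDerivAt_laguerre (α : ℝ) (n : ℕ) (x : ℝ) :
    HasDerivAt (fun y => laguerre α n y) (lagD α n x) x := by
  unfold laguerre lagD
  apply HasDerivAt.fun_sum
  intro k _
  exact ((hasDerivAt_pow k x).const_mul _).div_const _

lemma hasDerivAt_lagD (α : ℝ) (n : ℕ) (x : ℝ) :
    HasDerivAt (fun y => lagD α n y) (lagDD α n x) x := by
  unfold lagD lagDD
  apply HasDerivAt.fun_sum
  intro k _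
  exact (((hasDerivAt_pow (k-1) x).const_mul _).const_mul _).div_const _

lemma laguerre_ode (α : ℝ) (hα : -1/2 ≤ α) (n : ℕ) (y : ℝ) :
    y * lagDD α n y + (α + 1 - y) * lagD α n y + n * laguerre α n y = 0 := by
  have hΓpos : ∀ k : ℕ, 0 < Real.Gamma (α + k + 1) := by
    intro k
    apply Real.Gamma_pos_of_pos
    have : (0:ℝ) ≤ k := Nat.cast_nonneg k
    linarith
  set c : ℕ → ℝ := fun k =>
    (-1 : ℝ) ^ k * (Real.Gamma (n + α + 1) / ((Nat.factorial (n - k)) * Real.Gamma (α + k + 1)))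
      / (Nat.factorial k) with hc
  have key : ∀ k : ℕ, k < n →
      ((k:ℝ)+1) * (((k:ℝ)+1) + α) * c (k+1) + ((n:ℝ) - k) * c k = 0 := by
    intro k hk
    have hj : n - k = (n - (k+1)) + 1 := by omega
    have hncast : (n:ℝ) - k = ((n - (k+1) : ℕ) : ℝ) + 1 := by
      rw [Nat.cast_sub (by omega)]; push_cast; ring
    have hΓ : Real.Gamma (α + (k+1:ℕ) + 1) = (α + k + 1) * Real.Gamma (α + k + 1) := by
      have h1 : α + ((k:ℝ)+1) + 1 = (α + k + 1) + 1 := by ring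
      have h2 : (α + (k:ℝ) + 1) ≠ 0 := ne_of_gt (by have : (0:ℝ) ≤ k := Nat.cast_nonneg k; linarith)
      push_cast
      rw [h1, Real.Gamma_add_one h2]
    have hfac : ((Nat.factorial (n - k)) : ℝ) = (((n - (k+1) : ℕ):ℝ) + 1) * (Nat.factorial (n - (k+1))) := by
      rw [hj, Nat.factorial_succ]; push_cast; ring
    simp only [hc]
    rw [hΓ, hfac, hncast]
    have h2 : (α + (k:ℝ) + 1) ≠ 0 := ne_of_gt (by have : (0:ℝ) ≤ k := Nat.cast_nonneg k; linarith)
    have h3 : Real.Gamma (α + k + 1) ≠ 0 := ne_of_gt (hΓpos k)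
    have h4 : ((Nat.factorial (n - (k+1))):ℝ) ≠ 0 := Nat.cast_ne_zero.mpr (Nat.factorial_ne_zero _)
    have h5 : ((Nat.factorial k):ℝ) ≠ 0 := Nat.cast_ne_zero.mpr (Nat.factorial_ne_zero _)
    have h6 : ((Nat.factorial (k+1)):ℝ) = ((k:ℝ)+1) * (Nat.factorial k) := by
      rw [Nat.factorial_succ]; push_cast; ring
    have h7 : (((n - (k+1) : ℕ):ℝ) + 1) ≠ 0 := by positivity
    rw [h6, pow_succ]
    field_simp
    ring
  have main : y * lagDD α n y + (α + 1 - y) * lagD α n y + n * laguerre α n y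
      = (∑ k ∈ Finset.range (n+1), (k:ℝ) * ((k:ℝ) + α) * c k * y ^ (k-1))
        + (∑ k ∈ Finset.range (n+1), ((n:ℝ) - k) * c k * y ^ k) := by
    unfold laguerre lagD lagDD
    rw [Finset.mul_sum, Finset.mul_sum, Finset.mul_sum, ← Finset.sum_add_distrib,
      ← Finset.sum_add_distrib, ← Finset.sum_add_distrib]
    apply Finset.sum_congr rfl
    intro k _
    simp only [hc]
    match k with
    | 0 => simp
    | 1 => norm_num; ring
    | (m+2) =>
      simp only [Nat.add_sub_cancel, Nat.succ_sub_one]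
      push_cast
      rw [pow_succ]
      ring
  rw [main]
  rw [Finset.sum_range_succ' (fun k => (k:ℝ) * ((k:ℝ) + α) * c k * y ^ (k-1)) n,
    Finset.sum_range_succ (fun k => ((n:ℝ) - k) * c k * y ^ k) n]
  simp only [Nat.cast_zero, zero_mul, mul_zero, zero_add, add_zero, sub_self, zero_mul]
  rw [← Finset.sum_add_distrib]
  apply Finset.sum_eq_zero
  intro k hk
  have hk' : k < n := Finset.mem_range.mp hk
  have := key k hk'
  have hpow : (k+1) - 1 = k := by omega
  rw [hpow]
  push_cast
  push_cast at this
  linear_combination y ^ k * this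

noncomputable def fe (α : ℝ) (m : ℕ) (x : ℝ) : ℝ :=
  Real.exp (-x ^ 2 / 2) * laguerre α m (x ^ 2)
noncomputable def fe1 (α : ℝ) (m : ℕ) (x : ℝ) : ℝ :=
  Real.exp (-x ^ 2 / 2) * (2 * x * lagD α m (x ^ 2) - x * laguerre α m (x ^ 2))
noncomputable def fe2 (α : ℝ) (m : ℕ) (x : ℝ) : ℝ :=
  Real.exp (-x ^ 2 / 2) * (4 * x ^ 2 * lagDD α m (x ^ 2) + (2 - 4 * x ^ 2) * lagD α m (x ^ 2)
    + (x ^ 2 - 1) * laguerre α m (x ^ 2))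

noncomputable def fo (α : ℝ) (m : ℕ) (x : ℝ) : ℝ :=
  Real.exp (-x ^ 2 / 2) * (x * laguerre α m (x ^ 2))
noncomputable def fo1 (α : ℝ) (m : ℕ) (x : ℝ) : ℝ :=
  Real.exp (-x ^ 2 / 2) * ((1 - x ^ 2) * laguerre α m (x ^ 2) + 2 * x ^ 2 * lagD α m (x ^ 2))
noncomputable def fo2 (α : ℝ) (m : ℕ) (x : ℝ) : ℝ :=
  Real.exp (-x ^ 2 / 2) * ((x ^ 3 - 3 * x) * laguerre α m (x ^ 2)
    + (6 * x - 4 * x ^ 3) * lagD α m (x ^ 2) + 4 * x ^ 3 * lagDD α m (x ^ 2))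

lemma hasDerivAt_exp_part (x : ℝ) :
    HasDerivAt (fun y : ℝ => Real.exp (-y ^ 2 / 2)) (Real.exp (-x ^ 2 / 2) * (-x)) x := by
  have h : HasDerivAt (fun y : ℝ => -y ^ 2 / 2) (-x) x := by
    have := ((hasDerivAt_pow 2 x).neg.div_const 2)
    refine this.congr_deriv ?_
    norm_num; ring
  exact h.exp

lemma hasDerivAt_lag_sq (α : ℝ) (m : ℕ) (x : ℝ) :
    HasDerivAt (fun y => laguerre α m (y ^ 2)) (lagD α m (x ^ 2) * (2 * x)) x := by
  have h := (hasDerivAt_laguerre α m (x ^ 2)).comp x (hasDerivAt_pow 2 x)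
  exact h.congr_deriv (by norm_num)

lemma hasDerivAt_lagD_sq (α : ℝ) (m : ℕ) (x : ℝ) :
    HasDerivAt (fun y => lagD α m (y ^ 2)) (lagDD α m (x ^ 2) * (2 * x)) x := by
  have h := (hasDerivAt_lagD α m (x ^ 2)).comp x (hasDerivAt_pow 2 x)
  exact h.congr_deriv (by norm_num)

lemma hasDerivAt_fe (α : ℝ) (m : ℕ) (x : ℝ) :
    HasDerivAt (fun y => fe α m y) (fe1 α m x) x := by
  have h := (hasDerivAt_exp_part x).mul (hasDerivAt_lag_sq α m x)
  refine h.congr_deriv ?_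
  unfold fe1; ring

lemma hasDerivAt_fe1 (α : ℝ) (m : ℕ) (x : ℝ) :
    HasDerivAt (fun y => fe1 α m y) (fe2 α m x) x := by
  have hP : HasDerivAt (fun y : ℝ => 2 * y * lagD α m (y ^ 2) - y * laguerre α m (y ^ 2))
      ((2 * lagD α m (x ^ 2) + 2 * x * (lagDD α m (x ^ 2) * (2 * x)))
        - (1 * laguerre α m (x ^ 2) + x * (lagD α m (x ^ 2) * (2 * x)))) x := by
    have h1 : HasDerivAt (fun y : ℝ => 2 * y) (2 : ℝ) x := by
      simpa using (hasDerivAt_id x).const_mul (2:ℝ)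
    exact ((h1.mul (hasDerivAt_lagD_sq α m x)).sub
      ((hasDerivAt_id x).mul (hasDerivAt_lag_sq α m x)))
  have h := (hasDerivAt_exp_part x).mul hP
  refine h.congr_deriv ?_
  unfold fe2; ring

lemma hasDerivAt_fo (α : ℝ) (m : ℕ) (x : ℝ) :
    HasDerivAt (fun y => fo α m y) (fo1 α m x) x := by
  have hP : HasDerivAt (fun y : ℝ => y * laguerre α m (y ^ 2))
      (1 * laguerre α m (x ^ 2) + x * (lagD α m (x ^ 2) * (2 * x))) x :=
    (hasDerivAt_id x).mul (hasDerivAt_lag_sq α m x)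
  have h := (hasDerivAt_exp_part x).mul hP
  refine h.congr_deriv ?_
  unfold fo1; ring

lemma hasDerivAt_fo1 (α : ℝ) (m : ℕ) (x : ℝ) :
    HasDerivAt (fun y => fo1 α m y) (fo2 α m x) x := by
  have h1 : HasDerivAt (fun y : ℝ => (1 - y ^ 2)) (-(2 * x)) x := by
    simpa using ((hasDerivAt_pow 2 x).const_sub 1)
  have h2 : HasDerivAt (fun y : ℝ => 2 * y ^ 2) (2 * (2 * x)) x := by
    simpa using (hasDerivAt_pow 2 x).const_mul (2:ℝ)
  have hP : HasDerivAt
      (fun y : ℝ => (1 - y ^ 2) * laguerre α m (y ^ 2) + 2 * y ^ 2 * lagD α m (y ^ 2))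
      ((-(2 * x)) * laguerre α m (x ^ 2) + (1 - x ^ 2) * (lagD α m (x ^ 2) * (2 * x))
        + (2 * (2 * x) * lagD α m (x ^ 2) + 2 * x ^ 2 * (lagDD α m (x ^ 2) * (2 * x)))) x :=
    (h1.mul (hasDerivAt_lag_sq α m x)).add (h2.mul (hasDerivAt_lagD_sq α m x))
  have h := (hasDerivAt_exp_part x).mul hP
  refine h.congr_deriv ?_
  unfold fo2; ring

lemma fe_even (α : ℝ) (m : ℕ) (y : ℝ) : fe α m (-y) = fe α m y := by
  unfold fe; rw [neg_sq]

lemma fe1_odd (α : ℝ) (m : ℕ) (y : ℝ) : fe1 α m (-y) = -(fe1 α m y) := by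
  unfold fe1; rw [neg_sq]; ring

lemma fo_odd (α : ℝ) (m : ℕ) (y : ℝ) : fo α m (-y) = -(fo α m y) := by
  unfold fo; rw [neg_sq]; ring

lemma fo1_even (α : ℝ) (m : ℕ) (y : ℝ) : fo1 α m (-y) = fo1 α m y := by
  unfold fo1; rw [neg_sq]

lemma even_case (α : ℝ) (hα : -1/2 ≤ α) (m : ℕ) (C x : ℝ) (hx : x ≠ 0) :
    -(dunklT α (dunklT α (fun y => C * fe α m y)) x) + x ^ 2 * (C * fe α m x)
      = (4 * m + 2 * α + 2) * (C * fe α m x) := by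
  have hFeq : dunklT α (fun y => C * fe α m y) = fun y => C * fe1 α m y := by
    funext y
    simp only [dunklT]
    rw [((hasDerivAt_fe α m y).const_mul C).deriv, fe_even]
    ring
  rw [hFeq]
  simp only [dunklT]
  rw [((hasDerivAt_fe1 α m x).const_mul C).deriv, fe1_odd]
  have ode := laguerre_ode α hα m (x ^ 2)
  have hdiv : (α + 1/2) * (C * fe1 α m x - C * -fe1 α m x) / x
      = (2 * α + 1) * C * Real.exp (-x ^ 2 / 2)
        * (2 * lagD α m (x ^ 2) - laguerre α m (x ^ 2)) := by
    unfold fe1; field_simp; ring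
  rw [hdiv]
  unfold fe fe2
  linear_combination (-4 * C * Real.exp (-x ^ 2 / 2)) * ode

lemma odd_case (α : ℝ) (hα : -1/2 ≤ α) (m : ℕ) (C x : ℝ) (hx : x ≠ 0) :
    -(dunklT α (dunklT α (fun y => C * fo (α+1) m y)) x) + x ^ 2 * (C * fo (α+1) m x)
      = (4 * m + 2 * α + 4) * (C * fo (α+1) m x) := by
  set β := α + 1 with hβ
  have hβ' : -1/2 ≤ β := by rw [hβ]; linarith
  have hGagree : ∀ y : ℝ, y ≠ 0 → dunklT α (fun z => C * fo β m z) y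
      = C * fo1 β m y + (2 * α + 1) * (C * fo β m y / y) := by
    intro y hy
    simp only [dunklT]
    rw [((hasDerivAt_fo β m y).const_mul C).deriv, fo_odd]
    field_simp
    ring
  have hGderiv : HasDerivAt (fun y => C * fo1 β m y + (2 * α + 1) * (C * fo β m y / y))
      (C * fo2 β m x + (2 * α + 1) * ((C * fo1 β m x * x - C * fo β m x * 1) / x ^ 2)) x := by
    have h1 := (hasDerivAt_fo1 β m x).const_mul C
    have h2 := (((hasDerivAt_fo β m x).const_mul C).div (hasDerivAt_id x) hx).const_mul (2 * α + 1)
    exact h1.add h2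
  have hmem : {(0:ℝ)}ᶜ ∈ nhds x := compl_singleton_mem_nhds hx
  have hev : dunklT α (fun z => C * fo β m z)
      =ᶠ[nhds x] fun y => C * fo1 β m y + (2 * α + 1) * (C * fo β m y / y) :=
    Filter.eventuallyEq_of_mem hmem (fun y hy => hGagree y hy)
  have houter : dunklT α (dunklT α (fun z => C * fo β m z)) x
      = deriv (dunklT α (fun z => C * fo β m z)) x
        + (α + 1/2) * (dunklT α (fun z => C * fo β m z) x
          - dunklT α (fun z => C * fo β m z) (-x)) / x := rfl
  rw [houter, hev.deriv_eq, hGderiv.deriv, hGagree x hx, hGagree (-x) (neg_ne_zero.mpr hx),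
    fo_odd, fo1_even]
  have ode := laguerre_ode β hβ' m (x ^ 2)
  have hdiv : (2 * α + 1) * ((C * fo1 β m x * x - C * fo β m x * 1) / x ^ 2)
      = (2 * α + 1) * C * Real.exp (-x ^ 2 / 2)
        * (x * (2 * x ^ 2 * lagD β m (x ^ 2) - x ^ 2 * laguerre β m (x ^ 2))) / x ^ 2 := by
    unfold fo fo1; ring
  rw [hdiv]
  have hself : C * (-(fo β m x)) / -x = C * fo β m x / x := by ring
  rw [hself]
  unfold fo fo2
  field_simp
  simp only [neg_div] at *
  linear_combination (-8 * C * Real.exp (-(x ^ 2 / 2)) * x ^ 2) * ode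

theorem hfun_eigenfunction (α : ℝ) (hα : -1/2 ≤ α) (n : ℕ) (x : ℝ) (hx : x ≠ 0) :
    -(dunklT α (dunklT α (hfun α n)) x) + x ^ 2 * hfun α n x
      = (2 * n + 2 * α + 2) * hfun α n x := by
  by_cases h : n % 2 = 0
  · have hn : n = 2 * (n / 2) := by omega
    have hcast : (n : ℝ) = 2 * ((n / 2 : ℕ) : ℝ) := by exact_mod_cast congrArg (Nat.cast (R := ℝ)) hn
    set C := (-1 : ℝ) ^ (n / 2) *
      Real.sqrt (Nat.factorial (n / 2) / Real.Gamma ((n : ℝ) / 2 + α + 1)) with hC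
    have hfe : hfun α n = fun y => C * fe α (n / 2) y := by
      funext y
      simp only [hfun, if_pos h, fe, hC]
      ring
    rw [hfe]
    have h2 := even_case α hα (n / 2) C x hx
    linear_combination h2 - 2 * (C * fe α (n / 2) x) * hcast
  · have hn : n = 2 * (n / 2) + 1 := by omega
    have hcast : (n : ℝ) = 2 * ((n / 2 : ℕ) : ℝ) + 1 := by
      exact_mod_cast congrArg (Nat.cast (R := ℝ)) hn
    set C := (-1 : ℝ) ^ (n / 2) *
      Real.sqrt (Nat.factorial (n / 2) / Real.Gamma ((n : ℝ) / 2 + α + 2)) with hC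
    have hfo : hfun α n = fun y => C * fo (α + 1) (n / 2) y := by
      funext y
      simp only [hfun, if_neg h, fo, hC]
      ring
    rw [hfo]
    have h2 := odd_case α hα (n / 2) C x hx
    linear_combination h2 - 2 * (C * fo (α + 1) (n / 2) x) * hcast
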